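/- Let each process i have a strict partial order ↦ᵢ on messages induced by its sequence of delivered disjoint message sets (m ↦ᵢ m' iff the set containing m is delivered strictly before the set containing m'). If the family satisfies MS-Ordering, then the union ↦ = ⋃ᵢ ↦ᵢ is acyclic, and hence there exists a strict total order on the set of all messages extending ↦. -/

import Mathlib

/-- The union of the local delivery orders is acyclic and extends to a strict total
order on the messages. Each process `i` delivers the set containing message `m` at
position `pos i m`; `m ↦ᵢ m'` iff `pos i m < pos i m'`. -/
theorem union_delivery_order_acyclic_and_extendible {M : Type*} [Fintype M]
    (n : ℕ) (pos : Fin n → M → ℕ)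
    (hMS : ∀ (i j : Fin n) (m m' : M), ¬ (pos i m < pos i m' ∧ pos j m' < pos j m)) :
    (∀ m : M, ¬ Relation.TransGen (fun m m' => ∃ i, pos i m < pos i m') m m) ∧
    ∃ lt : M → M → Prop, IsStrictTotalOrder M lt ∧
      ∀ (i : Fin n) (m m' : M), pos i m < pos i m' → lt m m' := by
  classical
  set f : M → ℕ := fun m => ∑ i, pos i m with hf
  have hmono : ∀ m m' : M, (∃ i, pos i m < pos i m') → f m < f m' := by
    rintro m m' ⟨i, hi⟩
    refine Finset.sum_lt_sum (fun j _ => ?_) ⟨i, Finset.mem_univ i, hi⟩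
    by_contra h
    exact hMS i j m m' ⟨hi, lt_of_not_ge h⟩
  have htrans : ∀ m m' : M, Relation.TransGen (fun m m' => ∃ i, pos i m < pos i m') m m' →
      f m < f m' := by
    intro m m' hm
    induction hm with
    | single h => exact hmono _ _ h
    | tail _ h ih => exact ih.trans (hmono _ _ h)
  have hacyc : ∀ m : M, ¬ Relation.TransGen (fun m m' => ∃ i, pos i m < pos i m') m m :=
    fun m hm => lt_irrefl _ (htrans m m hm)
  refine ⟨hacyc, ?_⟩
  let e : M ≃ Fin (Fintype.card M) := Fintype.equivFin M
  refine ⟨fun m m' => f m < f m' ∨ (f m = f m' ∧ (e m : ℕ) < e m'), { trichotomous := ?_, irrefl := ?_, trans := ?_ }, ?_⟩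
  · intro a b hab hba
    rcases lt_trichotomy (f a) (f b) with h | h | h
    · exact absurd (Or.inl h) hab
    · rcases lt_trichotomy ((e a : ℕ)) (e b : ℕ) with h2 | h2 | h2
      · exact absurd (Or.inr ⟨h, h2⟩) hab
      · exact e.injective (Fin.ext h2)
      · exact absurd (Or.inr ⟨h.symm, h2⟩) hba
    · exact absurd (Or.inl h) hba
  · intro a h
    rcases h with h | ⟨_, h⟩ <;> exact lt_irrefl _ h
  · rintro a b c (hab | ⟨hab, hab'⟩) (hbc | ⟨hbc, hbc'⟩)
    · exact Or.inl (hab.trans hbc)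
    · exact Or.inl (hbc ▸ hab)
    · exact Or.inl (hab ▸ hbc)
    · exact Or.inr ⟨hab.trans hbc, hab'.trans hbc'⟩
  · intro i m m' h
    exact Or.inl (hmono m m' ⟨i, h⟩)
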